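/- (Abstract form of the main Theorem, time-average version.) Let E be a finite-dimensional complex inner product space. Let H⁰, V, P : E → E be self-adjoint linear maps and set H = H⁰ + V. Suppose (e_α) is an orthonormal basis of E consisting of joint eigenvectors: H⁰ e_α = ε_α e_α and P e_α = p_α e_α with real ε_α, p_α. Let ψ be a unit vector with H⁰ ψ = ε₀ ψ and P ψ = p0 ψ for reals ε₀, p0. Let λ > 0 and assume that p0 − p_α ≤ λ·(ε_α − ε₀) for every α. Suppose (Ψ_j) is an orthonormal basis of E with H Ψ_j = E_j Ψ_j, where the real eigenvalues E_j are pairwise distinct. Then the infinite-time averaged impurity momentum p_∞ = lim_{T→∞} (1/T)·∫₀^T ⟨exp(−itH)ψ, P exp(−itH)ψ⟩ dt exists and satisfies p_∞ ≥ p0 − λ·( ⟨ψ, V ψ⟩ − Σ_j |⟨ψ, Ψ_j⟩|² ⟨Ψ_j, V Ψ_j⟩ ). -/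

import Mathlib

open scoped InnerProductSpace

-- exp eigenvector lemma
theorem my_exp_eigen {E : Type*} [NormedAddCommGroup E] [NormedSpace ℂ E] [CompleteSpace E]
    (A : E →L[ℂ] E) (v : E) (μ : ℂ) (h : A v = μ • v) :
    NormedSpace.exp A v = Complex.exp μ • v := by
  have hpow : ∀ n : ℕ, (A ^ n) v = μ ^ n • v := by
    intro n
    induction n with
    | zero => simp
    | succ n ih =>
      rw [pow_succ, ContinuousLinearMap.mul_apply, h, map_smul, ih, smul_smul, ← pow_succ']
  have h1 : HasSum (fun n : ℕ => ((n.factorial : ℂ))⁻¹ • A ^ n) (NormedSpace.exp A) :=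
    NormedSpace.exp_series_hasSum_exp' (𝕂 := ℂ) A
  have h2 := h1.mapL (ContinuousLinearMap.apply ℂ E v)
  have h3 : HasSum (fun n : ℕ => (((n.factorial : ℂ))⁻¹ * μ ^ n) • v)
      (NormedSpace.exp A v) := by
    refine h2.congr_fun fun n => ?_
    simp [ContinuousLinearMap.apply_apply, hpow n, smul_smul]
  have h4 : HasSum (fun n : ℕ => (((n.factorial : ℂ))⁻¹ * μ ^ n) • v)
      ((NormedSpace.exp μ) • v) := by
    have := (NormedSpace.exp_series_hasSum_exp' (𝕂 := ℂ) μ).smul_const v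
    simpa [smul_eq_mul] using this
  have := h3.unique h4
  rw [this, Complex.exp_eq_exp_ℂ]

theorem my_expect {E : Type*} [NormedAddCommGroup E] [InnerProductSpace ℂ E]
    {ι : Type*} [Fintype ι] (b : OrthonormalBasis ι ℂ E)
    (A : E →L[ℂ] E) (hA : ∀ x y : E, ⟪A x, y⟫_ℂ = ⟪x, A y⟫_ℂ)
    (a : ι → ℝ) (hab : ∀ i, A (b i) = (a i : ℂ) • b i) (x : E) :
    ⟪x, A x⟫_ℂ = ((∑ i, a i * ‖⟪b i, x⟫_ℂ‖ ^ 2 : ℝ) : ℂ) := by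
  have key : ∀ i, ⟪x, b i⟫_ℂ * ⟪b i, A x⟫_ℂ = ((a i * ‖⟪b i, x⟫_ℂ‖ ^ 2 : ℝ) : ℂ) := by
    intro i
    rw [← hA (b i) x, hab i, inner_smul_left, ← inner_conj_symm x (b i)]
    rw [Complex.conj_ofReal]
    have : (starRingEnd ℂ) ⟪b i, x⟫_ℂ * ((a i : ℂ) * ⟪b i, x⟫_ℂ)
        = (a i : ℂ) * ((starRingEnd ℂ) ⟪b i, x⟫_ℂ * ⟪b i, x⟫_ℂ) := by ring
    rw [this, Complex.conj_mul']
    push_cast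
    ring
  rw [← b.sum_inner_mul_inner x (A x)]
  rw [Finset.sum_congr rfl (fun i _ => key i)]
  push_cast
  ring

theorem my_avg (a : ℂ) (ω : ℝ) :
    Filter.Tendsto (fun T : ℝ => (1 / T) *
      ∫ t in (0:ℝ)..T, (a * Complex.exp ((ω * t : ℝ) * Complex.I)).re)
      Filter.atTop (nhds (if ω = 0 then a.re else 0)) := by
  have hre : ∀ t : ℝ, (a * Complex.exp ((ω * t : ℝ) * Complex.I)).re
      = a.re * Real.cos (ω * t) - a.im * Real.sin (ω * t) := by
    intro t
    rw [Complex.mul_re, Complex.exp_ofReal_mul_I_re, Complex.exp_ofReal_mul_I_im]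
  by_cases hω : ω = 0
  · subst hω
    simp only [if_pos rfl]
    have heq : ∀ᶠ T : ℝ in Filter.atTop, (1 / T) *
        (∫ t in (0:ℝ)..T, (a * Complex.exp ((0 * t : ℝ) * Complex.I)).re) = a.re := by
      filter_upwards [Filter.eventually_gt_atTop 0] with T hT
      have : ∀ t : ℝ, (a * Complex.exp ((0 * t : ℝ) * Complex.I)).re = a.re := by
        intro t; rw [hre]; simp
      rw [intervalIntegral.integral_congr (fun t _ => this t)]
      rw [intervalIntegral.integral_const]
      field_simp
      rw [sub_zero, smul_eq_mul]
    exact Filter.Tendsto.congr' (heq.mono fun T h => h.symm) tendsto_const_nhds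
  · simp only [if_neg hω]
    have hωpos : (0:ℝ) < |ω| := abs_pos.mpr hω
    set M : ℝ := (|a.re| + 2 * |a.im|) / |ω| with hM
    have hint : ∀ T : ℝ, ∫ t in (0:ℝ)..T, (a * Complex.exp ((ω * t : ℝ) * Complex.I)).re
        = a.re * (Real.sin (ω * T) / ω) - a.im * ((1 - Real.cos (ω * T)) / ω) := by
      intro T
      rw [intervalIntegral.integral_congr (fun t _ => hre t)]
      rw [intervalIntegral.integral_sub]
      · rw [intervalIntegral.integral_const_mul, intervalIntegral.integral_const_mul]
        rw [intervalIntegral.integral_comp_mul_left (fun t => Real.cos t) hω]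
        rw [intervalIntegral.integral_comp_mul_left (fun t => Real.sin t) hω]
        simp [smul_eq_mul]
        ring
      · exact (Continuous.intervalIntegrable (by continuity) _ _)
      · exact (Continuous.intervalIntegrable (by continuity) _ _)
    have hbd : ∀ T : ℝ, |∫ t in (0:ℝ)..T, (a * Complex.exp ((ω * t : ℝ) * Complex.I)).re| ≤ M := by
      intro T
      rw [hint T, hM]
      have h1 : |Real.sin (ω * T) / ω| ≤ 1 / |ω| := by
        rw [abs_div]
        gcongr
        exact abs_le.mpr ⟨Real.neg_one_le_sin _, Real.sin_le_one _⟩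
      have h2 : |(1 - Real.cos (ω * T)) / ω| ≤ 2 / |ω| := by
        rw [abs_div]
        gcongr
        have ha := Real.neg_one_le_cos (ω * T)
        have hb := Real.cos_le_one (ω * T)
        rw [abs_le]
        constructor <;> linarith
      calc |a.re * (Real.sin (ω * T) / ω) - a.im * ((1 - Real.cos (ω * T)) / ω)|
          ≤ |a.re * (Real.sin (ω * T) / ω)| + |a.im * ((1 - Real.cos (ω * T)) / ω)| :=
            abs_sub _ _
        _ ≤ |a.re| * (1 / |ω|) + |a.im| * (2 / |ω|) := by
            rw [abs_mul, abs_mul]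
            gcongr
        _ = (|a.re| + 2 * |a.im|) / |ω| := by
            field_simp
    refine squeeze_zero_norm' (a := fun T : ℝ => M * (1 / T)) ?_ ?_
    · filter_upwards [Filter.eventually_gt_atTop 0] with T hT
      rw [Real.norm_eq_abs, abs_mul, abs_of_pos (by positivity : (0:ℝ) < 1 / T)]
      rw [mul_comm]
      exact mul_le_mul_of_nonneg_right (hbd T) (by positivity)
    · have h := (tendsto_inv_atTop_zero (𝕜 := ℝ)).const_mul M
      simpa [one_div] using h

/-- Abstract form of the main Theorem (time-average version): under the
sector bound `p0 − p_α ≤ λ (ε_α − ε₀)` for all joint eigenstates of `H⁰` and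
`P`, and assuming the spectrum of `H = H⁰ + V` is nondegenerate, the
infinite-time averaged impurity momentum
`p_∞ = lim_{T→∞} (1/T) ∫₀^T ⟨exp(−itH)ψ, P exp(−itH)ψ⟩ dt`
exists and satisfies
`p_∞ ≥ p0 − λ (⟨ψ, V ψ⟩ − ∑_j |⟨ψ, Ψ_j⟩|² ⟨Ψ_j, V Ψ_j⟩)`. -/
theorem time_averaged_momentum_lower_bound
    {E : Type*} [NormedAddCommGroup E] [InnerProductSpace ℂ E]
    [FiniteDimensional ℂ E]
    {ι ι' : Type*} [Fintype ι] [Fintype ι']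
    (H0 V P H : E →L[ℂ] E)
    (hH0 : ∀ x y : E, ⟪H0 x, y⟫_ℂ = ⟪x, H0 y⟫_ℂ)
    (hV : ∀ x y : E, ⟪V x, y⟫_ℂ = ⟪x, V y⟫_ℂ)
    (hP : ∀ x y : E, ⟪P x, y⟫_ℂ = ⟪x, P y⟫_ℂ)
    (hH : H = H0 + V)
    (e : OrthonormalBasis ι ℂ E) (ε p : ι → ℝ)
    (he_H0 : ∀ α, H0 (e α) = (ε α : ℂ) • e α)
    (he_P : ∀ α, P (e α) = (p α : ℂ) • e α)
    (ψ : E) (hψ : ‖ψ‖ = 1) (ε0 p0 : ℝ)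
    (hψ_H0 : H0 ψ = (ε0 : ℂ) • ψ)
    (hψ_P : P ψ = (p0 : ℂ) • ψ)
    (lam : ℝ) (hlam : 0 < lam)
    (hbound : ∀ α, p0 - p α ≤ lam * (ε α - ε0))
    (Ψ : OrthonormalBasis ι' ℂ E) (Ej : ι' → ℝ)
    (hΨ : ∀ j, H (Ψ j) = (Ej j : ℂ) • Ψ j)
    (hnondeg : Function.Injective Ej) :
    ∃ pinf : ℝ,
      Filter.Tendsto
        (fun T : ℝ => (1 / T) *
          ∫ t in (0)..T,
            (⟪NormedSpace.exp ((-(Complex.I * t)) • H) ψ,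
               P (NormedSpace.exp ((-(Complex.I * t)) • H) ψ)⟫_ℂ).re)
        Filter.atTop (nhds pinf)
      ∧ p0 - lam * ((⟪ψ, V ψ⟫_ℂ).re
            - ∑ j, ‖⟪ψ, Ψ j⟫_ℂ‖ ^ 2 * (⟪Ψ j, V (Ψ j)⟫_ℂ).re)
          ≤ pinf := by
  classical
  -- notation
  set c : ι' → ℂ := fun j => ⟪Ψ j, ψ⟫_ℂ with hc
  set w : ι' → ℝ := fun j => ‖⟪ψ, Ψ j⟫_ℂ‖ ^ 2 with hw
  have hwc : ∀ j, w j = ‖c j‖ ^ 2 := by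
    intro j; rw [hw, hc]; simp [norm_inner_symm]
  have hwnn : ∀ j, 0 ≤ w j := fun j => by rw [hw]; positivity
  set a : ι' → ι' → ℂ :=
    fun j k => (starRingEnd ℂ) (c j) * c k * ⟪Ψ j, P (Ψ k)⟫_ℂ with ha
  set ω : ι' → ι' → ℝ := fun j k => Ej j - Ej k with hω
  set pinf : ℝ := ∑ j, w j * (⟪Ψ j, P (Ψ j)⟫_ℂ).re with hpinf
  refine ⟨pinf, ?_, ?_⟩
  · -- convergence part
    -- pointwise expansion of the integrand
    have hexpand : ∀ t : ℝ,
        (⟪NormedSpace.exp ((-(Complex.I * t)) • H) ψ,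
           P (NormedSpace.exp ((-(Complex.I * t)) • H) ψ)⟫_ℂ).re
        = ∑ j, ∑ k, (a j k * Complex.exp ((ω j k * t : ℝ) * Complex.I)).re := by
      intro t
      set U := NormedSpace.exp ((-(Complex.I * t)) • H) with hU
      have hUj : ∀ j, U (Ψ j) = Complex.exp (-(Complex.I * t) * (Ej j : ℂ)) • Ψ j := by
        intro j
        apply my_exp_eigen
        rw [ContinuousLinearMap.smul_apply, hΨ j, smul_smul]
      have hUψ : U ψ = ∑ j, (c j * Complex.exp (-(Complex.I * t) * (Ej j : ℂ))) • Ψ j := by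
        conv_lhs => rw [← Ψ.sum_repr' ψ]
        rw [map_sum]
        refine Finset.sum_congr rfl fun j _ => ?_
        rw [map_smul, hUj j, smul_smul]
      have hinner : ⟪U ψ, P (U ψ)⟫_ℂ
          = ∑ j, ∑ k, (starRingEnd ℂ) (c j * Complex.exp (-(Complex.I * t) * (Ej j : ℂ)))
              * (c k * Complex.exp (-(Complex.I * t) * (Ej k : ℂ))) * ⟪Ψ j, P (Ψ k)⟫_ℂ := by
        rw [hUψ, map_sum, sum_inner]
        refine Finset.sum_congr rfl fun j _ => ?_
        rw [inner_smul_left, inner_sum, Finset.mul_sum]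
        refine Finset.sum_congr rfl fun k _ => ?_
        rw [map_smul, inner_smul_right]
        ring
      rw [hinner, Complex.re_sum]
      refine Finset.sum_congr rfl fun j _ => ?_
      rw [Complex.re_sum]
      refine Finset.sum_congr rfl fun k _ => ?_
      congr 1
      have hcoef : (starRingEnd ℂ) (Complex.exp (-(Complex.I * t) * (Ej j : ℂ)))
          * Complex.exp (-(Complex.I * t) * (Ej k : ℂ))
          = Complex.exp ((ω j k * t : ℝ) * Complex.I) := by
        rw [← Complex.exp_conj, ← Complex.exp_add]
        congr 1
        simp only [map_mul, map_neg, Complex.conj_I, Complex.conj_ofReal, hω]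
        push_cast
        ring
      rw [ha]
      calc (starRingEnd ℂ) (c j * Complex.exp (-(Complex.I * t) * (Ej j : ℂ)))
              * (c k * Complex.exp (-(Complex.I * t) * (Ej k : ℂ))) * ⟪Ψ j, P (Ψ k)⟫_ℂ
          = (starRingEnd ℂ) (c j) * c k * ⟪Ψ j, P (Ψ k)⟫_ℂ
              * ((starRingEnd ℂ) (Complex.exp (-(Complex.I * t) * (Ej j : ℂ)))
                * Complex.exp (-(Complex.I * t) * (Ej k : ℂ))) := by
            rw [map_mul]; ring
        _ = _ := by rw [hcoef]
    -- continuity / integrability of each term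
    have hcont : ∀ (b : ℂ) (v : ℝ), Continuous
        (fun t : ℝ => (b * Complex.exp ((v * t : ℝ) * Complex.I)).re) := by
      intro b v
      apply Complex.continuous_re.comp
      apply continuous_const.mul
      apply Complex.continuous_exp.comp
      exact (Complex.continuous_ofReal.comp (continuous_const.mul continuous_id)).mul
        continuous_const
    -- rewrite the average as a double sum of averages
    have hfeq : ∀ T : ℝ, (1 / T) *
        (∫ t in (0:ℝ)..T,
          (⟪NormedSpace.exp ((-(Complex.I * t)) • H) ψ,
             P (NormedSpace.exp ((-(Complex.I * t)) • H) ψ)⟫_ℂ).re)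
        = ∑ j, ∑ k, (1 / T) *
            ∫ t in (0:ℝ)..T, (a j k * Complex.exp ((ω j k * t : ℝ) * Complex.I)).re := by
      intro T
      rw [intervalIntegral.integral_congr (fun t _ => hexpand t)]
      rw [intervalIntegral.integral_finset_sum (fun j _ =>
        (Continuous.intervalIntegrable (by
          exact continuous_finset_sum _ fun k _ => hcont (a j k) (ω j k)) _ _))]
      rw [Finset.mul_sum]
      refine Finset.sum_congr rfl fun j _ => ?_
      rw [intervalIntegral.integral_finset_sum (fun k _ =>
        (Continuous.intervalIntegrable (hcont (a j k) (ω j k)) _ _))]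
      rw [Finset.mul_sum]
    -- the limit of the double sum
    have hlim : Filter.Tendsto
        (fun T : ℝ => ∑ j, ∑ k, (1 / T) *
          ∫ t in (0:ℝ)..T, (a j k * Complex.exp ((ω j k * t : ℝ) * Complex.I)).re)
        Filter.atTop
        (nhds (∑ j, ∑ k, if ω j k = 0 then (a j k).re else 0)) := by
      apply tendsto_finset_sum
      intro j _
      apply tendsto_finset_sum
      intro k _
      exact my_avg (a j k) (ω j k)
    have hval : (∑ j, ∑ k : ι', if ω j k = 0 then (a j k).re else 0) = pinf := by
      rw [hpinf]
      refine Finset.sum_congr rfl fun j _ => ?_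
      have h1 : ∀ k : ι', (if ω j k = 0 then (a j k).re else 0)
          = (if k = j then (a j k).re else 0) := by
        intro k
        congr 1
        simp only [hω, sub_eq_zero, eq_iff_iff]
        constructor
        · intro h; exact (hnondeg h).symm
        · intro h; rw [h]
      rw [Finset.sum_congr rfl fun k _ => h1 k, Finset.sum_ite_eq' Finset.univ j
        (fun k => (a j k).re), if_pos (Finset.mem_univ j)]
      have hcc : (starRingEnd ℂ) (c j) * c j = ((‖c j‖ ^ 2 : ℝ) : ℂ) := by
        rw [Complex.conj_mul']; push_cast; ring
      show ((starRingEnd ℂ) (c j) * c j * ⟪Ψ j, P (Ψ j)⟫_ℂ).re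
          = w j * (⟪Ψ j, P (Ψ j)⟫_ℂ).re
      rw [hcc, hwc j, Complex.re_ofReal_mul]
    rw [← hval]
    exact hlim.congr fun T => (hfeq T).symm
  · -- the inequality
    have hHsa : ∀ x y : E, ⟪H x, y⟫_ℂ = ⟪x, H y⟫_ℂ := by
      intro x y
      rw [hH]
      simp only [ContinuousLinearMap.add_apply, inner_add_left, inner_add_right, hH0 x y, hV x y]
    have hid : ∀ x y : E, ⟪(ContinuousLinearMap.id ℂ E) x, y⟫_ℂ
        = ⟪x, (ContinuousLinearMap.id ℂ E) y⟫_ℂ := fun x y => rfl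
    have hide : ∀ i : ι', (ContinuousLinearMap.id ℂ E) (Ψ i) = ((1:ℝ) : ℂ) • Ψ i := by
      intro i; simp
    -- sum of weights is 1
    have hF1 : ∑ j, w j = 1 := by
      have h := my_expect Ψ (ContinuousLinearMap.id ℂ E) hid (fun _ => (1:ℝ)) hide ψ
      simp only [ContinuousLinearMap.id_apply] at h
      have h2 : ⟪ψ, ψ⟫_ℂ = (1 : ℂ) := by
        rw [inner_self_eq_norm_sq_to_K, hψ]; norm_num
      rw [h2] at h
      have h3 := congrArg Complex.re h.symm
      simp only [Complex.one_re, Complex.ofReal_re, one_mul] at h3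
      rw [← h3]
      refine Finset.sum_congr rfl fun j _ => ?_
      show ‖⟪ψ, Ψ j⟫_ℂ‖ ^ 2 = ‖⟪Ψ j, ψ⟫_ℂ‖ ^ 2
      rw [norm_inner_symm]
    -- expectation of H in state ψ
    have hF4 : ∑ j, w j * Ej j = ε0 + (⟪ψ, V ψ⟫_ℂ).re := by
      have h := my_expect Ψ H hHsa Ej hΨ ψ
      have h2 : ⟪ψ, H ψ⟫_ℂ = (ε0 : ℂ) + ⟪ψ, V ψ⟫_ℂ := by
        rw [hH, ContinuousLinearMap.add_apply, inner_add_right, hψ_H0, inner_smul_right,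
          inner_self_eq_norm_sq_to_K, hψ]
        norm_num
      rw [h2] at h
      have h3 := congrArg Complex.re h
      simp only [Complex.add_re, Complex.ofReal_re] at h3
      rw [h3]
      refine Finset.sum_congr rfl fun j _ => ?_
      show ‖⟪ψ, Ψ j⟫_ℂ‖ ^ 2 * Ej j = Ej j * ‖⟪Ψ j, ψ⟫_ℂ‖ ^ 2
      rw [norm_inner_symm]
      ring
    -- per-eigenstate momentum bound
    have hF2 : ∀ j, p0 - (⟪Ψ j, P (Ψ j)⟫_ℂ).re
        ≤ lam * ((Ej j - (⟪Ψ j, V (Ψ j)⟫_ℂ).re) - ε0) := by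
      intro j
      have hPj := my_expect e P hP p he_P (Ψ j)
      have hH0j := my_expect e H0 hH0 ε he_H0 (Ψ j)
      have hidj := my_expect e (ContinuousLinearMap.id ℂ E)
        (fun x y => rfl) (fun _ => (1:ℝ)) (fun i => by simp) (Ψ j)
      set u : ι → ℝ := fun α => ‖⟪e α, Ψ j⟫_ℂ‖ ^ 2 with hu
      have hunn : ∀ α, 0 ≤ u α := fun α => by rw [hu]; positivity
      have husum : ∑ α, u α = 1 := by
        have h2 : ⟪Ψ j, Ψ j⟫_ℂ = (1 : ℂ) := by
          rw [inner_self_eq_norm_sq_to_K, Ψ.orthonormal.1 j]; norm_num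
        simp only [ContinuousLinearMap.id_apply] at hidj
        rw [h2] at hidj
        have h3 := congrArg Complex.re hidj.symm
        simp only [Complex.one_re, Complex.ofReal_re, one_mul] at h3
        exact h3
      have hPre : (⟪Ψ j, P (Ψ j)⟫_ℂ).re = ∑ α, p α * u α := by
        rw [hPj, Complex.ofReal_re]
      have hH0re : (⟪Ψ j, H0 (Ψ j)⟫_ℂ).re = ∑ α, ε α * u α := by
        rw [hH0j, Complex.ofReal_re]
      -- relate H0 expectation to Ej and V
      have hHj : (⟪Ψ j, H (Ψ j)⟫_ℂ).re = Ej j := by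
        rw [hΨ j, inner_smul_right, inner_self_eq_norm_sq_to_K, Ψ.orthonormal.1 j]
        norm_num
      have hsplit : (⟪Ψ j, H0 (Ψ j)⟫_ℂ).re = Ej j - (⟪Ψ j, V (Ψ j)⟫_ℂ).re := by
        have : ⟪Ψ j, H (Ψ j)⟫_ℂ = ⟪Ψ j, H0 (Ψ j)⟫_ℂ + ⟪Ψ j, V (Ψ j)⟫_ℂ := by
          rw [hH, ContinuousLinearMap.add_apply, inner_add_right]
        have h4 := congrArg Complex.re this
        rw [hHj, Complex.add_re] at h4
        linarith
      rw [← hsplit, hPre, hH0re]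
      have key : ∑ α, (p0 - p α) * u α ≤ ∑ α, lam * (ε α - ε0) * u α :=
        Finset.sum_le_sum fun α _ =>
          mul_le_mul_of_nonneg_right (hbound α) (hunn α)
      have lhs_eq : ∑ α, (p0 - p α) * u α = p0 - ∑ α, p α * u α := by
        rw [Finset.sum_congr rfl (fun α _ => sub_mul p0 (p α) (u α)),
          Finset.sum_sub_distrib, ← Finset.mul_sum, husum, mul_one]
      have rhs_eq : ∑ α, lam * (ε α - ε0) * u α = lam * ((∑ α, ε α * u α) - ε0) := by
        have : ∀ α, lam * (ε α - ε0) * u α = lam * (ε α * u α) - lam * ε0 * u α := by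
          intro α; ring
        rw [Finset.sum_congr rfl (fun α _ => this α), Finset.sum_sub_distrib,
          ← Finset.mul_sum, ← Finset.mul_sum, husum, mul_one]
        ring
      rw [lhs_eq, rhs_eq] at key
      exact key
    -- combine
    have key2 : ∑ j, w j * (p0 - (⟪Ψ j, P (Ψ j)⟫_ℂ).re)
        ≤ ∑ j, w j * (lam * ((Ej j - (⟪Ψ j, V (Ψ j)⟫_ℂ).re) - ε0)) :=
      Finset.sum_le_sum fun j _ => mul_le_mul_of_nonneg_left (hF2 j) (hwnn j)
    have lhs_eq : ∑ j, w j * (p0 - (⟪Ψ j, P (Ψ j)⟫_ℂ).re) = p0 - pinf := by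
      have : ∀ j, w j * (p0 - (⟪Ψ j, P (Ψ j)⟫_ℂ).re)
          = p0 * w j - w j * (⟪Ψ j, P (Ψ j)⟫_ℂ).re := by intro j; ring
      rw [Finset.sum_congr rfl (fun j _ => this j), Finset.sum_sub_distrib,
        ← Finset.mul_sum, hF1, mul_one, hpinf]
    have rhs_eq : ∑ j, w j * (lam * ((Ej j - (⟪Ψ j, V (Ψ j)⟫_ℂ).re) - ε0))
        = lam * ((⟪ψ, V ψ⟫_ℂ).re - ∑ j, w j * (⟪Ψ j, V (Ψ j)⟫_ℂ).re) := by
      have : ∀ j, w j * (lam * ((Ej j - (⟪Ψ j, V (Ψ j)⟫_ℂ).re) - ε0))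
          = lam * (w j * Ej j) - lam * (w j * (⟪Ψ j, V (Ψ j)⟫_ℂ).re)
            - lam * ε0 * w j := by intro j; ring
      rw [Finset.sum_congr rfl (fun j _ => this j), Finset.sum_sub_distrib,
        Finset.sum_sub_distrib, ← Finset.mul_sum, ← Finset.mul_sum, ← Finset.mul_sum,
        hF1, hF4, mul_one]
      ring
    rw [lhs_eq, rhs_eq] at key2
    have : ∑ j, ‖⟪ψ, Ψ j⟫_ℂ‖ ^ 2 * (⟪Ψ j, V (Ψ j)⟫_ℂ).re
        = ∑ j, w j * (⟪Ψ j, V (Ψ j)⟫_ℂ).re := rfl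
    rw [this]
    linarith
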